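/- Converse strong law for the outer capacity (Theorem 4(b)): Let {X_n; n ≥ 1} be a sequence of independent and identically distributed random variables in a sub-linear expectation space (Ω, ℋ, E), let V be the capacity generated by E and V* the associated outer capacity. Suppose V* is continuous and E is countably sub-additive. If V*( limsup_{n→∞} |S_n|/n = +∞ ) < 1, then C_V[|X_1|] < ∞. -/

import Mathlib

open scoped BigOperators ENNReal
open Filter

/-- The class `C_{l,Lip}(ℝ^n)` of local-Lipschitz test functions:
`|φ(x) − φ(y)| ≤ C (1 + |x|^m + |y|^m) |x − y|` for some `C > 0` and `m ∈ ℕ`. -/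
def CLLip {n : ℕ} (φ : (Fin n → ℝ) → ℝ) : Prop :=
  ∃ C > (0:ℝ), ∃ m : ℕ, ∀ x y : Fin n → ℝ,
    |φ x - φ y| ≤ C * (1 + ‖x‖ ^ m + ‖y‖ ^ m) * ‖x - y‖

/-- A sub-linear expectation space `(Ω, ℋ, E)`: `ℋ` is a set of real random variables
containing the constants and stable under composition with `C_{l,Lip}` functions, and
`E : ℋ → [-∞, ∞]` is monotone, constant preserving, sub-additive (whenever the right-hand
side is not of the form `∞ - ∞`) and positively homogeneous. -/
structure SLE (Ω : Type*) where
  H : Set (Ω → ℝ)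
  E : (Ω → ℝ) → EReal
  const_mem : ∀ c : ℝ, (fun _ => c) ∈ H
  comp_mem : ∀ {n : ℕ} (X : Fin n → Ω → ℝ) (φ : (Fin n → ℝ) → ℝ),
      (∀ i, X i ∈ H) → CLLip φ → (fun ω => φ (fun i => X i ω)) ∈ H
  mono : ∀ {X Y : Ω → ℝ}, X ∈ H → Y ∈ H → (∀ ω, X ω ≤ Y ω) → E X ≤ E Y
  const_eq : ∀ c : ℝ, E (fun _ => c) = (c : EReal)
  subadd : ∀ {X Y : Ω → ℝ}, X ∈ H → Y ∈ H →
      ¬(E X = ⊤ ∧ E Y = ⊥) → ¬(E X = ⊥ ∧ E Y = ⊤) →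
      E (fun ω => X ω + Y ω) ≤ E X + E Y
  homog : ∀ {X : Ω → ℝ}, X ∈ H → ∀ l : ℝ, 0 ≤ l →
      E (fun ω => l * X ω) = (l : EReal) * E X

/-- The canonical map from `[-∞,∞]` to `[0,∞]` (faithful on nonnegative values). -/
noncomputable def erealToENNReal (x : EReal) : ℝ≥0∞ :=
  if x = ⊤ then ⊤ else ENNReal.ofReal x.toReal

namespace SLE

variable {Ω : Type*}

/-- The conjugate (lower) expectation `ℰ[X] := -E[-X]`. -/
noncomputable def cE (S : SLE Ω) (X : Ω → ℝ) : EReal := - S.E (fun ω => - X ω)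

/-- `Y` (an `n`-dimensional random vector) is independent to `X` (an `m`-dimensional
random vector) under the sub-linear expectation `E`:
`E[φ(X,Y)] = E[ E[φ(x,Y)]|_{x=X} ]` for every `φ ∈ C_{l,Lip}(ℝ^m × ℝ^n)` such that
`φ̄(x) := E[|φ(x,Y)|] < ∞` for every `x` and `E[|φ̄(X)|] < ∞`. -/
def IndepTo (S : SLE Ω) {m n : ℕ} (X : Fin m → Ω → ℝ) (Y : Fin n → Ω → ℝ) : Prop :=
  ∀ φ : (Fin (m + n) → ℝ) → ℝ, CLLip φ →
    (∀ x : Fin m → ℝ, S.E (fun ω' => |φ (Fin.append x (fun i => Y i ω'))|) ≠ ⊤) →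
    S.E (fun ω =>
      |(S.E (fun ω' => |φ (Fin.append (fun i => X i ω) (fun i => Y i ω'))|)).toReal|) ≠ ⊤ →
    S.E (fun ω => φ (Fin.append (fun i => X i ω) (fun i => Y i ω))) =
      S.E (fun ω => (S.E (fun ω' => φ (Fin.append (fun i => X i ω) (fun i => Y i ω')))).toReal)

/-- `Y` (an `n`-dimensional random vector) is negatively dependent to `X`
(an `m`-dimensional random vector) under the sub-linear expectation `E`:
`E[φ₁(X) φ₂(Y)] ≤ E[φ₁(X)] E[φ₂(Y)]` for every pair of test functions
`φ₁ ∈ C_{l,Lip}(ℝ^m)`, `φ₂ ∈ C_{l,Lip}(ℝ^n)` which are both coordinatewise nondecreasing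
or both coordinatewise nonincreasing, with `φ₁(X) ≥ 0`, `E[φ₂(Y)] ≥ 0` and
`E[|φ₁(X) φ₂(Y)|], E[|φ₁(X)|], E[|φ₂(Y)|] < ∞`. -/
def NegDepTo (S : SLE Ω) {m n : ℕ} (X : Fin m → Ω → ℝ) (Y : Fin n → Ω → ℝ) : Prop :=
  ∀ (φ₁ : (Fin m → ℝ) → ℝ) (φ₂ : (Fin n → ℝ) → ℝ), CLLip φ₁ → CLLip φ₂ →
    ((Monotone φ₁ ∧ Monotone φ₂) ∨ (Antitone φ₁ ∧ Antitone φ₂)) →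
    (∀ ω, 0 ≤ φ₁ (fun i => X i ω)) →
    0 ≤ S.E (fun ω => φ₂ (fun i => Y i ω)) →
    S.E (fun ω => |φ₁ (fun i => X i ω) * φ₂ (fun i => Y i ω)|) ≠ ⊤ →
    S.E (fun ω => |φ₁ (fun i => X i ω)|) ≠ ⊤ →
    S.E (fun ω => |φ₂ (fun i => Y i ω)|) ≠ ⊤ →
    S.E (fun ω => φ₁ (fun i => X i ω) * φ₂ (fun i => Y i ω)) ≤
      S.E (fun ω => φ₁ (fun i => X i ω)) * S.E (fun ω => φ₂ (fun i => Y i ω))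

/-- The capacity generated by a sub-linear expectation:
`V(A) := inf{E[ξ] : I_A ≤ ξ, ξ ∈ ℋ}`. -/
noncomputable def V (S : SLE Ω) (A : Set Ω) : EReal :=
  sInf (S.E '' {ξ | ξ ∈ S.H ∧ ∀ ω, A.indicator (fun _ => (1:ℝ)) ω ≤ ξ ω})

/-- The outer capacity `V*(A) := inf{Σ_n V(A_n) : A ⊆ ⋃_n A_n}`. -/
noncomputable def Vstar (S : SLE Ω) (A : Set Ω) : EReal :=
  sInf {x : EReal | ∃ B : ℕ → Set Ω, A ⊆ ⋃ i, B i ∧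
    x = ((∑' i, erealToENNReal (S.V (B i)) : ℝ≥0∞) : EReal)}

/-- The Choquet integral
`C_V[X] := ∫_0^∞ V(X ≥ t) dt + ∫_{-∞}^0 (V(X ≥ t) − 1) dt`. -/
noncomputable def choquet (S : SLE Ω) (X : Ω → ℝ) : EReal :=
  ((∫⁻ t in Set.Ioi (0:ℝ), erealToENNReal (S.V {ω | t ≤ X ω}) : ℝ≥0∞) : EReal)
    - ((∫⁻ t in Set.Iio (0:ℝ), erealToENNReal (1 - S.V {ω | t ≤ X ω}) : ℝ≥0∞) : EReal)

/-- A sequence `{X_n ; n ≥ 1}` is identically distributed: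
`E[φ(X_i)] = E[φ(X_1)]` for all `i ≥ 1` and `φ ∈ C_{l,Lip}(ℝ)`. -/
def IdentDistrib (S : SLE Ω) (X : ℕ → Ω → ℝ) : Prop :=
  ∀ i : ℕ, 1 ≤ i → ∀ φ : (Fin 1 → ℝ) → ℝ, CLLip φ →
    S.E (fun ω => φ (fun _ => X i ω)) = S.E (fun ω => φ (fun _ => X 1 ω))

/-- A sequence `{X_n ; n ≥ 1}` is negatively dependent:
`X_{i+1}` is negatively dependent to `(X_1, …, X_i)` for every `i ≥ 1`. -/
def NegDepSeq (S : SLE Ω) (X : ℕ → Ω → ℝ) : Prop :=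
  ∀ i : ℕ, 1 ≤ i →
    S.NegDepTo (fun j : Fin i => X ((j : ℕ) + 1)) (fun _ : Fin 1 => X (i + 1))

/-- A sequence `{X_n ; n ≥ 1}` is independent:
`X_{i+1}` is independent to `(X_1, …, X_i)` for every `i ≥ 1`. -/
def IndepSeq (S : SLE Ω) (X : ℕ → Ω → ℝ) : Prop :=
  ∀ i : ℕ, 1 ≤ i →
    S.IndepTo (fun j : Fin i => X ((j : ℕ) + 1)) (fun _ : Fin 1 => X (i + 1))

end SLE

section Helpers

/-- The clipped ramp function: `0` for `|t| ≤ c`, `1` for `|t| ≥ 2c`. -/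
noncomputable def gcl (c t : ℝ) : ℝ := min 1 (max 0 (|t|/c - 1))

lemma gcl_nonneg (c t : ℝ) : 0 ≤ gcl c t := by
  unfold gcl
  rcases le_total (1:ℝ) (max 0 (|t|/c - 1)) with h|h
  · rw [min_eq_left h]; norm_num
  · rw [min_eq_right h]; exact le_max_left _ _

lemma gcl_le_one (c t : ℝ) : gcl c t ≤ 1 := min_le_left _ _

lemma gcl_eq_one {c t : ℝ} (hc : 0 < c) (h : 2*c ≤ |t|) : gcl c t = 1 := by
  unfold gcl
  have h1 : (1:ℝ) ≤ |t|/c - 1 := by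
    rw [le_sub_iff_add_le, le_div_iff₀ hc]; linarith
  rw [max_eq_right (le_trans (by norm_num) h1), min_eq_left h1]

lemma gcl_eq_zero {c t : ℝ} (hc : 0 < c) (h : |t| ≤ c) : gcl c t = 0 := by
  unfold gcl
  have h1 : |t|/c - 1 ≤ 0 := by
    rw [sub_nonpos, div_le_one hc]; exact h
  rw [max_eq_left h1, min_eq_right (by norm_num)]

lemma gcl_lip {c : ℝ} (hc : 1 ≤ c) (s t : ℝ) : |gcl c s - gcl c t| ≤ |s - t| := by
  have hc0 : (0:ℝ) < c := lt_of_lt_of_le one_pos hc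
  have h1 : |gcl c s - gcl c t| ≤ |max 0 (|s|/c - 1) - max 0 (|t|/c - 1)| := by
    have := abs_min_sub_min_le_max (1:ℝ) (max 0 (|s|/c - 1)) 1 (max 0 (|t|/c - 1))
    simpa [gcl] using this
  have h2 : |max 0 (|s|/c - 1) - max 0 (|t|/c - 1)| ≤ |(|s|/c - 1) - (|t|/c - 1)| := by
    have := abs_max_sub_max_le_abs (|s|/c - 1) (|t|/c - 1) 0
    simpa [max_comm] using this
  have h3 : |(|s|/c - 1) - (|t|/c - 1)| = |(|s| - |t|)|/c := by
    rw [show (|s|/c - 1) - (|t|/c - 1) = (|s| - |t|)/c by ring, abs_div, abs_of_pos hc0]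
  have h4 : |(|s| - |t|)|/c ≤ |(|s| - |t|)| := by
    apply div_le_self (abs_nonneg _) hc
  have h5 : |(|s| - |t|)| ≤ |s - t| := abs_abs_sub_abs_le_abs_sub s t
  calc |gcl c s - gcl c t| ≤ |max 0 (|s|/c - 1) - max 0 (|t|/c - 1)| := h1
    _ ≤ |(|s|/c - 1) - (|t|/c - 1)| := h2
    _ = |(|s| - |t|)|/c := h3
    _ ≤ |(|s| - |t|)| := h4
    _ ≤ |s - t| := h5

/-- Difference of products of `[0,1]`-valued families. -/
lemma abs_prod_sub_prod_le {ι : Type*} (s : Finset ι) (a b : ι → ℝ)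
    (ha0 : ∀ i ∈ s, 0 ≤ a i) (ha1 : ∀ i ∈ s, a i ≤ 1)
    (hb0 : ∀ i ∈ s, 0 ≤ b i) (hb1 : ∀ i ∈ s, b i ≤ 1) :
    |∏ i ∈ s, a i - ∏ i ∈ s, b i| ≤ ∑ i ∈ s, |a i - b i| := by
  classical
  induction s using Finset.induction_on with
  | empty => simp
  | @insert j s hj ih =>
    have hA0 : 0 ≤ ∏ i ∈ s, a i := Finset.prod_nonneg (fun i hi => ha0 i (Finset.mem_insert_of_mem hi))
    have hA1 : ∏ i ∈ s, a i ≤ 1 := Finset.prod_le_one (fun i hi => ha0 i (Finset.mem_insert_of_mem hi)) (fun i hi => ha1 i (Finset.mem_insert_of_mem hi))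
    have hB0 : 0 ≤ ∏ i ∈ s, b i := Finset.prod_nonneg (fun i hi => hb0 i (Finset.mem_insert_of_mem hi))
    have hB1 : ∏ i ∈ s, b i ≤ 1 := Finset.prod_le_one (fun i hi => hb0 i (Finset.mem_insert_of_mem hi)) (fun i hi => hb1 i (Finset.mem_insert_of_mem hi))
    have haj0 := ha0 j (Finset.mem_insert_self _ _)
    have haj1 := ha1 j (Finset.mem_insert_self _ _)
    have hbj0 := hb0 j (Finset.mem_insert_self _ _)
    have ihs := ih (fun i hi => ha0 i (Finset.mem_insert_of_mem hi))
      (fun i hi => ha1 i (Finset.mem_insert_of_mem hi))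
      (fun i hi => hb0 i (Finset.mem_insert_of_mem hi))
      (fun i hi => hb1 i (Finset.mem_insert_of_mem hi))
    rw [Finset.prod_insert hj, Finset.prod_insert hj, Finset.sum_insert hj]
    have key : |a j * ∏ i ∈ s, a i - b j * ∏ i ∈ s, b i| ≤
        |a j - b j| * ∏ i ∈ s, a i + b j * |∏ i ∈ s, a i - ∏ i ∈ s, b i| := by
      have : a j * ∏ i ∈ s, a i - b j * ∏ i ∈ s, b i
          = (a j - b j) * ∏ i ∈ s, a i + b j * (∏ i ∈ s, a i - ∏ i ∈ s, b i) := by ring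
      rw [this]
      refine le_trans (abs_add_le _ _) ?_
      rw [abs_mul, abs_mul, abs_of_nonneg hA0, abs_of_nonneg hbj0]
    refine le_trans key ?_
    have h1 : |a j - b j| * ∏ i ∈ s, a i ≤ |a j - b j| := by
      nlinarith [abs_nonneg (a j - b j)]
    have h2 : b j * |∏ i ∈ s, a i - ∏ i ∈ s, b i| ≤ |∏ i ∈ s, a i - ∏ i ∈ s, b i| := by
      have := hb1 j (Finset.mem_insert_self _ _)
      nlinarith [abs_nonneg (∏ i ∈ s, a i - ∏ i ∈ s, b i)]
    linarith [ihs]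

end Helpers
namespace SLE

variable {Ω : Type*} (S : SLE Ω)

lemma mem_comp1 {Z : Ω → ℝ} (hZ : Z ∈ S.H) (ψ : ℝ → ℝ) (C : ℝ) (hC : 0 < C)
    (hlip : ∀ s t, |ψ s - ψ t| ≤ C * |s - t|) : (fun ω => ψ (Z ω)) ∈ S.H := by
  have hCL : CLLip (fun v : Fin 1 → ℝ => ψ (v 0)) := by
    refine ⟨C, hC, 0, fun x y => ?_⟩
    have h1 : |x 0 - y 0| ≤ ‖x - y‖ := by
      have := norm_le_pi_norm (x - y) 0
      simpa using this
    have h2 : |ψ (x 0) - ψ (y 0)| ≤ C * |x 0 - y 0| := hlip _ _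
    have h3 : C * |x 0 - y 0| ≤ C * ‖x - y‖ := by
      exact mul_le_mul_of_nonneg_left h1 (le_of_lt hC)
    have h4 : C * ‖x - y‖ ≤ C * (1 + ‖x‖ ^ 0 + ‖y‖ ^ 0) * ‖x - y‖ := by
      simp only [pow_zero]
      nlinarith [norm_nonneg (x - y)]
    linarith
  have := S.comp_mem (fun _ : Fin 1 => Z) (fun v : Fin 1 → ℝ => ψ (v 0)) (fun _ => hZ) hCL
  simpa using this

lemma E_le_const {Z : Ω → ℝ} (hZ : Z ∈ S.H) {b : ℝ} (h : ∀ ω, Z ω ≤ b) :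
    S.E Z ≤ (b : EReal) := by
  have := S.mono hZ (S.const_mem b) h
  rwa [S.const_eq] at this

lemma const_le_E {Z : Ω → ℝ} (hZ : Z ∈ S.H) {a : ℝ} (h : ∀ ω, a ≤ Z ω) :
    (a : EReal) ≤ S.E Z := by
  have := S.mono (S.const_mem a) hZ h
  rwa [S.const_eq] at this

lemma E_ne_top {Z : Ω → ℝ} (hZ : Z ∈ S.H) {b : ℝ} (h : ∀ ω, Z ω ≤ b) : S.E Z ≠ ⊤ :=
  fun hT => EReal.coe_ne_top b (top_le_iff.1 (hT ▸ S.E_le_const hZ h))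

lemma E_ne_bot {Z : Ω → ℝ} (hZ : Z ∈ S.H) {a : ℝ} (h : ∀ ω, a ≤ Z ω) : S.E Z ≠ ⊥ :=
  fun hB => EReal.coe_ne_bot a (le_bot_iff.1 (hB ▸ S.const_le_E hZ h))

lemma E_eq_coe {Z : Ω → ℝ} (hZ : Z ∈ S.H) {a b : ℝ} (h1 : ∀ ω, a ≤ Z ω)
    (h2 : ∀ ω, Z ω ≤ b) : S.E Z = (((S.E Z).toReal : ℝ) : EReal) :=
  (EReal.coe_toReal (S.E_ne_top hZ h2) (S.E_ne_bot hZ h1)).symm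

lemma toReal_E_le {Z : Ω → ℝ} (hZ : Z ∈ S.H) {a b : ℝ} (h1 : ∀ ω, a ≤ Z ω)
    (h2 : ∀ ω, Z ω ≤ b) : (S.E Z).toReal ≤ b := by
  have := S.E_le_const hZ h2
  rw [S.E_eq_coe hZ h1 h2] at this
  exact EReal.coe_le_coe_iff.1 this

lemma le_toReal_E {Z : Ω → ℝ} (hZ : Z ∈ S.H) {a b : ℝ} (h1 : ∀ ω, a ≤ Z ω)
    (h2 : ∀ ω, Z ω ≤ b) : a ≤ (S.E Z).toReal := by
  have := S.const_le_E hZ h1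
  rw [S.E_eq_coe hZ h1 h2] at this
  exact EReal.coe_le_coe_iff.1 this

lemma E_affine {Z : Ω → ℝ} (hZ : Z ∈ S.H) {a b : ℝ} (h1 : ∀ ω, a ≤ Z ω)
    (h2 : ∀ ω, Z ω ≤ b) (c d : ℝ) (hd : 0 ≤ d) :
    S.E (fun ω => c + d * Z ω) = ((c + d * (S.E Z).toReal : ℝ) : EReal) := by
  set r : ℝ := (S.E Z).toReal with hrdef
  have hr : S.E Z = (r : EReal) := S.E_eq_coe hZ h1 h2
  have hW : (fun ω => d * Z ω) ∈ S.H := by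
    refine S.mem_comp1 hZ (fun t => d * t) (d + 1) (by linarith) (fun s t => ?_)
    rw [show d * s - d * t = d * (s - t) by ring, abs_mul, abs_of_nonneg hd]
    nlinarith [abs_nonneg (s - t)]
  have hEW : S.E (fun ω => d * Z ω) = ((d * r : ℝ) : EReal) := by
    rw [S.homog hZ d hd, hr, ← EReal.coe_mul]
  have hCW : (fun ω => c + d * Z ω) ∈ S.H := by
    refine S.mem_comp1 hZ (fun t => c + d * t) (d + 1) (by linarith) (fun s t => ?_)
    rw [show (c + d * s) - (c + d * t) = d * (s - t) by ring, abs_mul, abs_of_nonneg hd]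
    nlinarith [abs_nonneg (s - t)]
  have hub : ∀ ω, c + d * Z ω ≤ c + d * b := fun ω => by nlinarith [h2 ω]
  have hlb : ∀ ω, c + d * a ≤ c + d * Z ω := fun ω => by nlinarith [h1 ω]
  set s : ℝ := (S.E (fun ω => c + d * Z ω)).toReal with hsdef
  have hs : S.E (fun ω => c + d * Z ω) = (s : EReal) := S.E_eq_coe hCW hlb hub
  -- upper bound
  have hupper : S.E (fun ω => c + d * Z ω) ≤ (c : EReal) + ((d * r : ℝ) : EReal) := by
    have := S.subadd (S.const_mem c) hW
      (by rw [S.const_eq]; exact fun ⟨h, _⟩ => EReal.coe_ne_top c h)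
      (by rw [S.const_eq]; exact fun ⟨h, _⟩ => EReal.coe_ne_bot c h)
    rw [S.const_eq, hEW] at this
    exact this
  have hupper' : s ≤ c + d * r := by
    rw [hs, ← EReal.coe_add] at hupper
    exact EReal.coe_le_coe_iff.1 hupper
  -- lower bound
  have hlower : ((d * r : ℝ) : EReal) ≤ (s : EReal) + ((-c : ℝ) : EReal) := by
    have heq : (fun ω => (c + d * Z ω) + (-c)) = (fun ω => d * Z ω) := by
      funext ω; ring
    have := S.subadd hCW (S.const_mem (-c))
      (by rw [S.const_eq]; exact fun ⟨_, h⟩ => EReal.coe_ne_bot (-c) h)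
      (by rw [S.const_eq]; exact fun ⟨_, h⟩ => EReal.coe_ne_top (-c) h)
    rw [S.const_eq, hs, heq, hEW] at this
    exact this
  have hlower' : c + d * r ≤ s := by
    rw [← EReal.coe_add] at hlower
    have := EReal.coe_le_coe_iff.1 hlower
    linarith
  rw [hs]
  norm_cast
  linarith

end SLE
section VLemmas

variable {Ω : Type*} (S : SLE Ω)

lemma SLE.V_le_E {A : Set Ω} {ξ : Ω → ℝ} (hξ : ξ ∈ S.H)
    (h : ∀ ω, A.indicator (fun _ => (1:ℝ)) ω ≤ ξ ω) : S.V A ≤ S.E ξ :=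
  sInf_le ⟨ξ, ⟨hξ, h⟩, rfl⟩

lemma SLE.V_mono {A B : Set Ω} (h : A ⊆ B) : S.V A ≤ S.V B := by
  apply sInf_le_sInf
  rintro x ⟨ξ, ⟨hξ, hind⟩, rfl⟩
  refine ⟨ξ, ⟨hξ, fun ω => le_trans ?_ (hind ω)⟩, rfl⟩
  exact Set.indicator_le_indicator_of_subset h (fun _ => zero_le_one) ω

lemma SLE.V_nonneg (A : Set Ω) : (0 : EReal) ≤ S.V A := by
  apply le_sInf
  rintro x ⟨ξ, ⟨hξ, hind⟩, rfl⟩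
  have : ∀ ω, (0:ℝ) ≤ ξ ω := fun ω =>
    le_trans (Set.indicator_nonneg (fun _ _ => zero_le_one) ω) (hind ω)
  exact_mod_cast S.const_le_E hξ this

lemma SLE.one_le_E_of_indicator {A : Set Ω} {ξ : Ω → ℝ} (hξ : ξ ∈ S.H) (hA : A = Set.univ)
    (h : ∀ ω, A.indicator (fun _ => (1:ℝ)) ω ≤ ξ ω) : (1 : EReal) ≤ S.E ξ := by
  have h1 : ∀ ω, (1:ℝ) ≤ ξ ω := by
    intro ω
    have := h ω
    rwa [hA, Set.indicator_univ] at this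
  exact_mod_cast S.const_le_E hξ h1

lemma SLE.V_univ : S.V (Set.univ : Set Ω) = 1 := by
  apply le_antisymm
  · have h1 : S.V (Set.univ : Set Ω) ≤ S.E (fun _ => (1:ℝ)) := by
      apply S.V_le_E (S.const_mem 1)
      intro ω; rw [Set.indicator_univ]
    rwa [S.const_eq] at h1
  · apply le_sInf
    rintro x ⟨ξ, ⟨hξ, hind⟩, rfl⟩
    exact S.one_le_E_of_indicator hξ rfl hind

lemma SLE.V_le_one (A : Set Ω) : S.V A ≤ 1 := by
  have := S.V_mono (Set.subset_univ A)
  rwa [S.V_univ] at this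

lemma erealToENNReal_coe (r : ℝ) : erealToENNReal (r : EReal) = ENNReal.ofReal r := by
  unfold erealToENNReal
  rw [if_neg (EReal.coe_ne_top r), EReal.toReal_coe]

lemma erealToENNReal_zero : erealToENNReal (0 : EReal) = 0 := by
  have : ((0:ℝ) : EReal) = (0 : EReal) := rfl
  rw [← this, erealToENNReal_coe, ENNReal.ofReal_zero]

lemma erealToENNReal_le_ofReal {x : EReal} {r : ℝ} (hr : 0 ≤ r) (h : x ≤ (r : EReal)) :
    erealToENNReal x ≤ ENNReal.ofReal r := by
  unfold erealToENNReal
  split_ifs with hx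
  · exact (EReal.coe_ne_top r (top_le_iff.1 (hx ▸ h))).elim
  · rcases eq_or_ne x ⊥ with hb | hb
    · simp [hb, EReal.toReal_bot, ENNReal.ofReal_zero]
    · exact ENNReal.ofReal_le_ofReal (by
        have := EReal.toReal_le_toReal h hb (EReal.coe_ne_top r)
        rwa [EReal.toReal_coe] at this)

lemma erealToENNReal_le_one {x : EReal} (h : x ≤ 1) : erealToENNReal x ≤ 1 := by
  have h1 : x ≤ ((1:ℝ) : EReal) := by exact_mod_cast h
  have := erealToENNReal_le_ofReal zero_le_one h1
  rwa [ENNReal.ofReal_one] at this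

lemma erealToENNReal_mono_nonneg {x y : EReal} (hy : y ≠ ⊤) (hy0 : (0:EReal) ≤ y)
    (h : x ≤ y) : erealToENNReal x ≤ erealToENNReal y := by
  have hb : y ≠ ⊥ := fun hb => by simp [hb] at hy0
  have hr : (0:ℝ) ≤ y.toReal := by
    have := EReal.toReal_le_toReal hy0 (by simp) hy
    simpa using this
  have hxy : x ≤ ((y.toReal : ℝ) : EReal) := by
    rw [EReal.coe_toReal hy hb]; exact h
  have h1 : erealToENNReal x ≤ ENNReal.ofReal y.toReal := erealToENNReal_le_ofReal hr hxy
  have h2 : erealToENNReal y = ENNReal.ofReal y.toReal := by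
    unfold erealToENNReal; rw [if_neg hy]
  rw [h2]; exact h1

lemma SLE.Vstar_mono {A B : Set Ω} (h : A ⊆ B) : S.Vstar A ≤ S.Vstar B := by
  apply sInf_le_sInf
  rintro x ⟨Bs, hcov, rfl⟩
  exact ⟨Bs, h.trans hcov, rfl⟩

lemma SLE.Vstar_nonneg (A : Set Ω) : (0 : EReal) ≤ S.Vstar A := by
  apply le_sInf
  rintro x ⟨Bs, hcov, rfl⟩
  exact EReal.coe_ennreal_nonneg _

end VLemmas
section VstarGe

variable {Ω : Type*}

lemma ereal_coe_ennreal_of_toReal {T : ℝ≥0∞} (hT : T ≠ ⊤) :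
    ((T.toReal : ℝ) : EReal) = (T : EReal) := by
  rw [← EReal.toReal_coe_ennreal (x := T)]
  exact EReal.coe_toReal (by rwa [ne_eq, EReal.coe_ennreal_eq_top_iff])
    (fun h => by simpa [h] using EReal.coe_ennreal_nonneg T)

lemma SLE.Vstar_ge_E (S : SLE Ω)
    (hEsub : ∀ (X₀ : Ω → ℝ) (Y : ℕ → Ω → ℝ), X₀ ∈ S.H → (∀ i, Y i ∈ S.H) →
      (∀ ω, 0 ≤ X₀ ω) → (∀ i ω, 0 ≤ Y i ω) →
      (∀ ω, ENNReal.ofReal (X₀ ω) ≤ ∑' i, ENNReal.ofReal (Y i ω)) →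
      S.E X₀ ≤ ((∑' i, erealToENNReal (S.E (Y i)) : ℝ≥0∞) : EReal))
    {W : Ω → ℝ} {U : Set Ω} (hW : W ∈ S.H) (hW0 : ∀ ω, 0 ≤ W ω) (hW1 : ∀ ω, W ω ≤ 1)
    (hWU : ∀ ω, ω ∉ U → W ω = 0) :
    S.E W ≤ S.Vstar U := by
  apply le_sInf
  rintro x ⟨Bs, hcov, rfl⟩
  set T : ℝ≥0∞ := ∑' i, erealToENNReal (S.V (Bs i)) with hTdef
  rcases eq_or_ne T ⊤ with hT | hT
  · rw [hT, EReal.coe_ennreal_top]; exact le_top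
  -- all V (Bs i) are finite
  have hVfin : ∀ i, S.V (Bs i) ≠ ⊤ := by
    intro i hV
    have h1 : erealToENNReal (S.V (Bs i)) = ⊤ := by unfold erealToENNReal; rw [if_pos hV]
    exact hT (top_le_iff.1 (h1 ▸ ENNReal.le_tsum (f := fun i => erealToENNReal (S.V (Bs i))) i))
  have hVbot : ∀ i, S.V (Bs i) ≠ ⊥ := fun i h => by
    simpa [h] using S.V_nonneg (Bs i)
  set v : ℕ → ℝ := fun i => (S.V (Bs i)).toReal with hvdef
  have hv : ∀ i, S.V (Bs i) = ((v i : ℝ) : EReal) := fun i =>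
    (EReal.coe_toReal (hVfin i) (hVbot i)).symm
  have hv0 : ∀ i, 0 ≤ v i := by
    intro i
    have := EReal.toReal_le_toReal (S.V_nonneg (Bs i)) (by simp) (hVfin i)
    simpa using this
  have hTv : T = ∑' i, ENNReal.ofReal (v i) := by
    apply tsum_congr
    intro i
    rw [hv i, erealToENNReal_coe]
  -- β : the (finite) value of E W
  set β : ℝ := (S.E W).toReal with hβdef
  have hβ : S.E W = ((β : ℝ) : EReal) := S.E_eq_coe hW hW0 hW1
  -- main ε-estimate
  have hmain : ∀ ε : ℝ, 0 < ε → β ≤ T.toReal + 2 * ε := by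
    intro ε hε
    have hex : ∀ i : ℕ, ∃ ξ : Ω → ℝ, ξ ∈ S.H ∧
        (∀ ω, (Bs i).indicator (fun _ => (1:ℝ)) ω ≤ ξ ω) ∧
        S.E ξ < ((v i + ε * (1/2)^(i+1) : ℝ) : EReal) := by
      intro i
      have hlt : S.V (Bs i) < ((v i + ε * (1/2)^(i+1) : ℝ) : EReal) := by
        rw [hv i]
        apply EReal.coe_lt_coe_iff.2
        have : (0:ℝ) < ε * (1/2)^(i+1) := by positivity
        linarith
      obtain ⟨y, hy, hylt⟩ := sInf_lt_iff.1 hlt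
      obtain ⟨ξ, ⟨hξ, hind⟩, rfl⟩ := hy
      exact ⟨ξ, hξ, hind, hylt⟩
    choose ξ hmem hind hlt using hex
    have hξ0 : ∀ i ω, 0 ≤ ξ i ω := fun i ω =>
      le_trans (Set.indicator_nonneg (fun _ _ => zero_le_one) ω) (hind i ω)
    have hpt : ∀ ω, ENNReal.ofReal (W ω) ≤ ∑' i, ENNReal.ofReal (ξ i ω) := by
      intro ω
      by_cases hωU : ω ∈ U
      · obtain ⟨i, hi⟩ := Set.mem_iUnion.1 (hcov hωU)
        have h1 : W ω ≤ ξ i ω := by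
          have := hind i ω
          rw [Set.indicator_of_mem hi] at this
          linarith [hW1 ω]
        exact le_trans (ENNReal.ofReal_le_ofReal h1)
          (ENNReal.le_tsum (f := fun i => ENNReal.ofReal (ξ i ω)) i)
      · simp [hWU ω hωU]
    have hsub := hEsub W ξ hW hmem hW0 hξ0 hpt
    -- bound the tsum
    have hterm : ∀ i, erealToENNReal (S.E (ξ i)) ≤
        ENNReal.ofReal (v i) + ENNReal.ofReal (ε * (1/2)^(i+1)) := by
      intro i
      have h1 : erealToENNReal (S.E (ξ i)) ≤ ENNReal.ofReal (v i + ε * (1/2)^(i+1)) :=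
        erealToENNReal_le_ofReal (by
          have h := hv0 i
          have h2 : (0:ℝ) < (1/2:ℝ)^(i+1) := by positivity
          nlinarith) (le_of_lt (hlt i))
      exact le_trans h1 ENNReal.ofReal_add_le
    have htsum : (∑' i, erealToENNReal (S.E (ξ i))) ≤
        T + ∑' i, ENNReal.ofReal (ε * (1/2)^(i+1)) := by
      calc (∑' i, erealToENNReal (S.E (ξ i)))
          ≤ ∑' i, (ENNReal.ofReal (v i) + ENNReal.ofReal (ε * (1/2)^(i+1))) :=
            ENNReal.tsum_le_tsum hterm
        _ = (∑' i, ENNReal.ofReal (v i)) + ∑' i, ENNReal.ofReal (ε * (1/2)^(i+1)) :=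
            ENNReal.tsum_add
        _ = T + ∑' i, ENNReal.ofReal (ε * (1/2)^(i+1)) := by rw [hTv]
    have hgeo : (∑' i : ℕ, ENNReal.ofReal (ε * (1/2)^(i+1))) ≤ ENNReal.ofReal ε * 2 := by
      have h1 : ∀ i : ℕ, ENNReal.ofReal (ε * (1/2)^(i+1)) ≤
          ENNReal.ofReal ε * (2⁻¹ : ℝ≥0∞)^i := by
        intro i
        rw [ENNReal.ofReal_mul (le_of_lt hε)]
        apply mul_le_mul_right
        have h2 : ENNReal.ofReal ((1/2:ℝ)^(i+1)) = (ENNReal.ofReal (1/2))^(i+1) := by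
          rw [ENNReal.ofReal_pow (by norm_num)]
        rw [h2]
        have h3 : ENNReal.ofReal (1/2 : ℝ) = (2⁻¹ : ℝ≥0∞) := by
          rw [ENNReal.ofReal_div_of_pos (by norm_num)]
          simp [ENNReal.ofReal_one, ENNReal.ofReal_ofNat]
        rw [h3]
        exact pow_le_pow_right_of_le_one' (by norm_num) (by omega)
      calc (∑' i : ℕ, ENNReal.ofReal (ε * (1/2)^(i+1)))
          ≤ ∑' i : ℕ, ENNReal.ofReal ε * (2⁻¹ : ℝ≥0∞)^i := ENNReal.tsum_le_tsum h1
        _ = ENNReal.ofReal ε * ∑' i : ℕ, (2⁻¹ : ℝ≥0∞)^i := ENNReal.tsum_mul_left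
        _ = ENNReal.ofReal ε * 2 := by
            rw [ENNReal.tsum_geometric]
            norm_num
    have hfinal : S.E W ≤ ((T + ENNReal.ofReal ε * 2 : ℝ≥0∞) : EReal) := by
      refine le_trans hsub ?_
      apply EReal.coe_ennreal_le_coe_ennreal_iff.2
      exact le_trans htsum (add_le_add (le_refl T) hgeo)
    have hfin2 : (T + ENNReal.ofReal ε * 2) ≠ ⊤ := by
      apply ENNReal.add_ne_top.2
      exact ⟨hT, ENNReal.mul_ne_top ENNReal.ofReal_ne_top (by norm_num)⟩
    rw [hβ, ← ereal_coe_ennreal_of_toReal hfin2] at hfinal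
    have := EReal.coe_le_coe_iff.1 hfinal
    rw [ENNReal.toReal_add hT (ENNReal.mul_ne_top ENNReal.ofReal_ne_top (by norm_num))] at this
    rw [ENNReal.toReal_mul, ENNReal.toReal_ofReal (le_of_lt hε)] at this
    simpa [mul_comm] using this
  have hβT : β ≤ T.toReal := by
    refine le_of_forall_pos_le_add (fun ε hε => ?_)
    have := hmain (ε/2) (by linarith)
    linarith
  rw [hβ, ← ereal_coe_ennreal_of_toReal hT]
  exact EReal.coe_le_coe_iff.2 hβT

end VstarGe
section PhiFDef

/-- The `k`-th factor: `1 - gcl (N k) t` for `k ≥ N`, and `1` otherwise. -/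
noncomputable def fct (N k : ℕ) (t : ℝ) : ℝ :=
  if N ≤ k then 1 - gcl ((N:ℝ)*k) t else 1

/-- `1` minus the product of factors along the first `m` coordinates. -/
noncomputable def PhiF (N m : ℕ) (x : Fin m → ℝ) : ℝ :=
  1 - ∏ j : Fin m, fct N ((j:ℕ)+1) (x j)

lemma fct_nonneg (N k : ℕ) (t : ℝ) : 0 ≤ fct N k t := by
  unfold fct; split_ifs
  · linarith [gcl_le_one ((N:ℝ)*k) t]
  · norm_num

lemma fct_le_one (N k : ℕ) (t : ℝ) : fct N k t ≤ 1 := by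
  unfold fct; split_ifs
  · linarith [gcl_nonneg ((N:ℝ)*k) t]
  · exact le_rfl

lemma fct_lip {N : ℕ} (hN : 1 ≤ N) (k : ℕ) (s t : ℝ) :
    |fct N k s - fct N k t| ≤ |s - t| := by
  unfold fct; split_ifs with h
  · have hc : (1:ℝ) ≤ (N:ℝ)*k := by
      have h1 : (1:ℝ) ≤ (N:ℝ) := by exact_mod_cast hN
      have h2 : (1:ℝ) ≤ (k:ℝ) := by exact_mod_cast le_trans hN h
      nlinarith
    have := gcl_lip hc s t
    calc |(1 - gcl ((N:ℝ)*k) s) - (1 - gcl ((N:ℝ)*k) t)|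
        = |gcl ((N:ℝ)*k) s - gcl ((N:ℝ)*k) t| := by
          rw [show (1 - gcl ((N:ℝ)*k) s) - (1 - gcl ((N:ℝ)*k) t)
            = -(gcl ((N:ℝ)*k) s - gcl ((N:ℝ)*k) t) by ring, abs_neg]
      _ ≤ |s - t| := this
  · simpa using abs_nonneg (s - t)

lemma PhiF_nonneg (N m : ℕ) (x : Fin m → ℝ) : 0 ≤ PhiF N m x := by
  unfold PhiF
  have := Finset.prod_le_one (s := (Finset.univ : Finset (Fin m)))
    (fun j _ => fct_nonneg N ((j:ℕ)+1) (x j)) (fun j _ => fct_le_one N ((j:ℕ)+1) (x j))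
  linarith

lemma PhiF_le_one (N m : ℕ) (x : Fin m → ℝ) : PhiF N m x ≤ 1 := by
  unfold PhiF
  have := Finset.prod_nonneg (s := (Finset.univ : Finset (Fin m)))
    (fun j _ => fct_nonneg N ((j:ℕ)+1) (x j))
  linarith

lemma PhiF_lip {N : ℕ} (hN : 1 ≤ N) (m : ℕ) (x y : Fin m → ℝ) :
    |PhiF N m x - PhiF N m y| ≤ (m:ℝ) * ‖x - y‖ := by
  unfold PhiF
  have h1 : |(1 - ∏ j : Fin m, fct N ((j:ℕ)+1) (x j)) - (1 - ∏ j : Fin m, fct N ((j:ℕ)+1) (y j))|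
      = |∏ j : Fin m, fct N ((j:ℕ)+1) (x j) - ∏ j : Fin m, fct N ((j:ℕ)+1) (y j)| := by
    rw [show (1 - ∏ j : Fin m, fct N ((j:ℕ)+1) (x j)) - (1 - ∏ j : Fin m, fct N ((j:ℕ)+1) (y j))
      = -(∏ j : Fin m, fct N ((j:ℕ)+1) (x j) - ∏ j : Fin m, fct N ((j:ℕ)+1) (y j)) by ring, abs_neg]
  rw [h1]
  have h2 := abs_prod_sub_prod_le (Finset.univ : Finset (Fin m))
    (fun j => fct N ((j:ℕ)+1) (x j)) (fun j => fct N ((j:ℕ)+1) (y j))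
    (fun j _ => fct_nonneg _ _ _) (fun j _ => fct_le_one _ _ _)
    (fun j _ => fct_nonneg _ _ _) (fun j _ => fct_le_one _ _ _)
  refine le_trans h2 ?_
  have h3 : ∀ j : Fin m, |fct N ((j:ℕ)+1) (x j) - fct N ((j:ℕ)+1) (y j)| ≤ ‖x - y‖ := by
    intro j
    refine le_trans (fct_lip hN _ _ _) ?_
    have := norm_le_pi_norm (x - y) j
    simpa using this
  calc (∑ j : Fin m, |fct N ((j:ℕ)+1) (x j) - fct N ((j:ℕ)+1) (y j)|)
      ≤ ∑ _j : Fin m, ‖x - y‖ := Finset.sum_le_sum (fun j _ => h3 j)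
    _ = (m:ℝ) * ‖x - y‖ := by rw [Finset.sum_const, Finset.card_univ, Fintype.card_fin]; simp [nsmul_eq_mul]

lemma PhiF_CLLip {N : ℕ} (hN : 1 ≤ N) (m : ℕ) : CLLip (PhiF N m) := by
  refine ⟨(m:ℝ)+1, by positivity, 0, fun x y => ?_⟩
  have h1 := PhiF_lip hN m x y
  have h2 : (m:ℝ) * ‖x - y‖ ≤ ((m:ℝ)+1) * (1 + ‖x‖ ^ 0 + ‖y‖ ^ 0) * ‖x - y‖ := by
    simp only [pow_zero]
    nlinarith [norm_nonneg (x - y), Nat.cast_nonneg (α := ℝ) m]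
  linarith

lemma PhiF_succ {N m : ℕ} (hNm : N ≤ m+1) (z : Fin (m+1) → ℝ) :
    PhiF N (m+1) z = PhiF N m (fun j => z (Fin.castAdd 1 j)) +
      gcl ((N:ℝ)*((m:ℝ)+1)) (z (Fin.natAdd m 0)) *
        (1 - PhiF N m (fun j => z (Fin.castAdd 1 j))) := by
  have hlast : (Fin.natAdd m (0 : Fin 1)) = Fin.last m := by
    ext; simp
  have hcast : ∀ j : Fin m, Fin.castSucc j = Fin.castAdd 1 j := fun j => rfl
  unfold PhiF
  rw [Fin.prod_univ_castSucc]
  have hfct : fct N ((Fin.last m : ℕ)+1) (z (Fin.last m))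
      = 1 - gcl ((N:ℝ)*((m:ℝ)+1)) (z (Fin.last m)) := by
    unfold fct
    rw [if_pos (by simpa [Fin.val_last] using hNm)]
    have hc : (((Fin.last m : ℕ) + 1 : ℕ) : ℝ) = (m:ℝ)+1 := by
      simp [Fin.val_last]
    rw [hc]
  have hprod : (∏ j : Fin m, fct N (↑(Fin.castSucc j) + 1) (z (Fin.castSucc j)))
      = ∏ j : Fin m, fct N ((j:ℕ)+1) (z (Fin.castAdd 1 j)) := by
    apply Finset.prod_congr rfl
    intro j _
    rw [hcast j]
    rfl
  rw [hprod, hfct, hlast]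
  ring

lemma PhiF_ext {N : ℕ} (hN : 1 ≤ N) (m : ℕ) (y : ℕ → ℝ) :
    PhiF N m (fun j : Fin m => y ((j:ℕ)+1)) =
      1 - ∏ k ∈ Finset.Icc N m, (1 - gcl ((N:ℝ)*k) (y k)) := by
  unfold PhiF
  congr 1
  have h1 : (∏ j : Fin m, fct N ((j:ℕ)+1) (y ((j:ℕ)+1)))
      = ∏ k ∈ Finset.range m, fct N (k+1) (y (k+1)) :=
    Fin.prod_univ_eq_prod_range (fun k => fct N (k+1) (y (k+1))) m
  have h2 : (∏ k ∈ Finset.Icc 1 m, fct N k (y k))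
      = ∏ k ∈ Finset.range m, fct N (1+k) (y (1+k)) := by
    rw [← Finset.Ico_add_one_right_eq_Icc, Finset.prod_Ico_eq_prod_range]
    simp
  have h3 : (∏ k ∈ Finset.Icc 1 m, fct N k (y k))
      = ∏ k ∈ Finset.Icc N m, (1 - gcl ((N:ℝ)*k) (y k)) := by
    unfold fct
    rw [← Finset.prod_filter]
    congr 1
    ext k
    simp only [Finset.mem_filter, Finset.mem_Icc]
    omega
  rw [h1, ← h3, h2]
  apply Finset.prod_congr rfl
  intro k _
  rw [add_comm]

end PhiFDef
section KeyInduction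

variable {Ω : Type*}

lemma CLLip_step {N : ℕ} (hN : 1 ≤ N) (m : ℕ) (c : ℝ) (hc : 1 ≤ c) :
    CLLip (fun z : Fin (m+1) → ℝ => PhiF N m (fun j => z (Fin.castAdd 1 j)) +
      gcl c (z (Fin.natAdd m 0)) * (1 - PhiF N m (fun j => z (Fin.castAdd 1 j)))) := by
  refine ⟨(m:ℝ)+2, by positivity, 0, fun z w => ?_⟩
  set a := PhiF N m (fun j => z (Fin.castAdd 1 j)) with ha
  set b := PhiF N m (fun j => w (Fin.castAdd 1 j)) with hb
  set s := gcl c (z (Fin.natAdd m 0)) with hs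
  set t := gcl c (w (Fin.natAdd m 0)) with ht
  have key : (a + s * (1 - a)) - (b + t * (1 - b)) = (a - b) * (1 - s) + (s - t) * (1 - b) := by
    ring
  have h0a : 0 ≤ a := PhiF_nonneg _ _ _
  have h1a : a ≤ 1 := PhiF_le_one _ _ _
  have h0b : 0 ≤ b := PhiF_nonneg _ _ _
  have h1b : b ≤ 1 := PhiF_le_one _ _ _
  have h0s : 0 ≤ s := gcl_nonneg _ _
  have h1s : s ≤ 1 := gcl_le_one _ _
  have hnorm1 : ‖(fun j => z (Fin.castAdd 1 j)) - (fun j => w (Fin.castAdd 1 j))‖ ≤ ‖z - w‖ := by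
    rcases Nat.eq_zero_or_pos m with hm | hm
    · subst hm
      have : ((fun j : Fin 0 => z (Fin.castAdd 1 j)) - (fun j => w (Fin.castAdd 1 j))) = 0 := by
        funext j; exact absurd j.2 (by omega)
      rw [this, norm_zero]
      exact norm_nonneg _
    · have : Nonempty (Fin m) := ⟨⟨0, hm⟩⟩
      rw [pi_norm_le_iff_of_nonneg (norm_nonneg _)]
      intro j
      have h := norm_le_pi_norm (z - w) (Fin.castAdd 1 j)
      simpa using h
  have hab : |a - b| ≤ (m:ℝ) * ‖z - w‖ := by
    refine le_trans (PhiF_lip hN m _ _) ?_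
    exact mul_le_mul_of_nonneg_left hnorm1 (Nat.cast_nonneg m)
  have hst : |s - t| ≤ ‖z - w‖ := by
    refine le_trans (gcl_lip hc _ _) ?_
    have h := norm_le_pi_norm (z - w) (Fin.natAdd m 0)
    simpa using h
  have habs : |(a + s * (1 - a)) - (b + t * (1 - b))| ≤ |a - b| + |s - t| := by
    rw [key]
    refine le_trans (abs_add_le _ _) ?_
    rw [abs_mul, abs_mul]
    have e1 : |1 - s| ≤ 1 := by rw [abs_of_nonneg (by linarith)]; linarith
    have e2 : |1 - b| ≤ 1 := by rw [abs_of_nonneg (by linarith)]; linarith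
    nlinarith [abs_nonneg (a - b), abs_nonneg (s - t)]
  have hfin : |a - b| + |s - t| ≤ ((m:ℝ)+1) * ‖z - w‖ := by
    nlinarith [norm_nonneg (z - w)]
  have hlast : ((m:ℝ)+1) * ‖z - w‖ ≤ ((m:ℝ)+2) * (1 + ‖z‖ ^ 0 + ‖w‖ ^ 0) * ‖z - w‖ := by
    simp only [pow_zero]
    nlinarith [norm_nonneg (z - w), Nat.cast_nonneg (α := ℝ) m]
  linarith

lemma key_induction (S : SLE Ω) (X : ℕ → Ω → ℝ)
    (hH : ∀ i, 1 ≤ i → X i ∈ S.H)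
    (hind : S.IndepSeq X)
    {N : ℕ} (hN : 1 ≤ N) (m : ℕ) :
    S.E (fun ω => PhiF N m (fun j : Fin m => X ((j:ℕ)+1) ω)) =
      ((1 - ∏ k ∈ Finset.Icc N m,
        (1 - (S.E (fun ω => gcl ((N:ℝ)*(k:ℝ)) (X k ω))).toReal) : ℝ) : EReal) := by
  -- preliminaries
  have hgcl_c : ∀ k : ℕ, 1 ≤ k → (1:ℝ) ≤ (N:ℝ)*(k:ℝ) := by
    intro k hk
    have h1 : (1:ℝ) ≤ (N:ℝ) := by exact_mod_cast hN
    have h2 : (1:ℝ) ≤ (k:ℝ) := by exact_mod_cast hk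
    nlinarith
  have memg : ∀ k : ℕ, 1 ≤ k → (fun ω => gcl ((N:ℝ)*(k:ℝ)) (X k ω)) ∈ S.H := by
    intro k hk
    exact S.mem_comp1 (hH k hk) (gcl ((N:ℝ)*(k:ℝ))) 1 one_pos
      (fun s t => by simpa using gcl_lip (hgcl_c k hk) s t)
  have e0 : ∀ k : ℕ, 1 ≤ k → 0 ≤ (S.E (fun ω => gcl ((N:ℝ)*(k:ℝ)) (X k ω))).toReal :=
    fun k hk => S.le_toReal_E (memg k hk) (fun ω => gcl_nonneg _ _) (fun ω => gcl_le_one _ _)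
  have e1 : ∀ k : ℕ, 1 ≤ k → (S.E (fun ω => gcl ((N:ℝ)*(k:ℝ)) (X k ω))).toReal ≤ 1 :=
    fun k hk => S.toReal_E_le (memg k hk) (fun ω => gcl_nonneg _ _) (fun ω => gcl_le_one _ _)
  have memPhi : ∀ m : ℕ, (fun ω => PhiF N m (fun j : Fin m => X ((j:ℕ)+1) ω)) ∈ S.H := by
    intro m
    exact S.comp_mem (fun j : Fin m => X ((j:ℕ)+1)) (PhiF N m)
      (fun j => hH _ (by omega)) (PhiF_CLLip hN m)
  induction m with
  | zero =>
    have hfun : (fun ω => PhiF N 0 (fun j : Fin 0 => X ((j:ℕ)+1) ω)) = (fun _ => (0:ℝ)) := by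
      funext ω; unfold PhiF; simp
    rw [hfun, S.const_eq, Finset.Icc_eq_empty (by omega), Finset.prod_empty]
    norm_num
  | succ m ih =>
    by_cases hNm : N ≤ m + 1
    · rcases Nat.eq_zero_or_pos m with hm0 | hm1
      · -- m = 0, so N = 1 : direct computation
        subst hm0
        have hN1 : N = 1 := by omega
        subst hN1
        have hfun : (fun ω => PhiF 1 1 (fun j : Fin 1 => X ((j:ℕ)+1) ω))
            = (fun ω => gcl ((1:ℕ):ℝ) (X 1 ω)) := by
          funext ω
          unfold PhiF fct
          simp
        have hfun2 : (fun ω => gcl (((1:ℕ):ℝ)*((1:ℕ):ℝ)) (X 1 ω))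
            = (fun ω => gcl ((1:ℕ):ℝ) (X 1 ω)) := by
          norm_num
        rw [hfun, Finset.Icc_self, Finset.prod_singleton, hfun2]
        have hmem : (fun ω => gcl ((1:ℕ):ℝ) (X 1 ω)) ∈ S.H := by
          have := memg 1 le_rfl
          rwa [hfun2] at this
        have := S.E_eq_coe hmem (fun ω => gcl_nonneg _ _) (fun ω => gcl_le_one _ _)
        rw [this]
        norm_num
      · -- independence step, m ≥ 1, N ≤ m+1
        set c : ℝ := (N:ℝ)*((m:ℝ)+1) with hcdef
        have hc1 : (1:ℝ) ≤ c := by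
          have := hgcl_c (m+1) (by omega)
          rw [hcdef]
          push_cast at this ⊢
          linarith
        set φ : (Fin (m+1) → ℝ) → ℝ := fun z =>
          PhiF N m (fun j => z (Fin.castAdd 1 j)) +
            gcl c (z (Fin.natAdd m 0)) * (1 - PhiF N m (fun j => z (Fin.castAdd 1 j))) with hφdef
        have hφCL : CLLip φ := CLLip_step hN m c hc1
        have hφ01 : ∀ z, 0 ≤ φ z ∧ φ z ≤ 1 := by
          intro z
          have h0a : 0 ≤ PhiF N m (fun j => z (Fin.castAdd 1 j)) := PhiF_nonneg _ _ _
          have h1a : PhiF N m (fun j => z (Fin.castAdd 1 j)) ≤ 1 := PhiF_le_one _ _ _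
          have h0s : 0 ≤ gcl c (z (Fin.natAdd m 0)) := gcl_nonneg _ _
          have h1s : gcl c (z (Fin.natAdd m 0)) ≤ 1 := gcl_le_one _ _
          constructor
          · rw [hφdef]; dsimp only; nlinarith
          · rw [hφdef]; dsimp only; nlinarith
        -- evaluation of φ on appended vectors
        have hφapp : ∀ (x : Fin m → ℝ) (y : Fin 1 → ℝ),
            φ (Fin.append x y) = PhiF N m x + gcl c (y 0) * (1 - PhiF N m x) := by
          intro x y
          rw [hφdef]
          dsimp only
          rw [show (fun j => Fin.append x y (Fin.castAdd 1 j)) = x from funext (fun j => Fin.append_left x y j)]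
          rw [Fin.append_right x y 0]
        -- side condition 1
        have hside1 : ∀ x : Fin m → ℝ,
            S.E (fun ω' => |φ (Fin.append x (fun _ : Fin 1 => X (m+1) ω'))|) ≠ ⊤ := by
          intro x
          set a := PhiF N m x with hadef
          have h0a : 0 ≤ a := PhiF_nonneg _ _ _
          have h1a : a ≤ 1 := PhiF_le_one _ _ _
          have hfun : (fun ω' => |φ (Fin.append x (fun _ : Fin 1 => X (m+1) ω'))|)
              = (fun ω' => a + gcl c (X (m+1) ω') * (1 - a)) := by
            funext ω'
            rw [hφapp x (fun _ => X (m+1) ω')]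
            have h0s : 0 ≤ gcl c (X (m+1) ω') := gcl_nonneg _ _
            exact abs_of_nonneg (by nlinarith)
          rw [hfun]
          have hmem : (fun ω' => a + gcl c (X (m+1) ω') * (1 - a)) ∈ S.H := by
            refine S.mem_comp1 (hH (m+1) (by omega)) (fun t => a + gcl c t * (1 - a)) 1 one_pos
              (fun s t => ?_)
            have h1 : |(a + gcl c s * (1 - a)) - (a + gcl c t * (1 - a))|
                = |gcl c s - gcl c t| * |1 - a| := by
              rw [← abs_mul]; congr 1; ring
            rw [h1]
            have h2 := gcl_lip hc1 s t
            have h3 : |1 - a| ≤ 1 := by rw [abs_of_nonneg (by linarith)]; linarith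
            nlinarith [abs_nonneg (gcl c s - gcl c t), abs_nonneg (s - t)]
          exact S.E_ne_top hmem (b := 1) (fun ω' => by
            nlinarith [gcl_nonneg c (X (m+1) ω'), gcl_le_one c (X (m+1) ω')])
        -- the inner expectation, computed
        set e' : ℝ := (S.E (fun ω => gcl c (X (m+1) ω))).toReal with he'def
        have hmemg' : (fun ω => gcl c (X (m+1) ω)) ∈ S.H := by
          refine S.mem_comp1 (hH (m+1) (by omega)) (gcl c) 1 one_pos
            (fun s t => by simpa using gcl_lip hc1 s t)
        have he'0 : 0 ≤ e' :=
          S.le_toReal_E hmemg' (fun ω => gcl_nonneg _ _) (fun ω => gcl_le_one _ _)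
        have he'1 : e' ≤ 1 :=
          S.toReal_E_le hmemg' (fun ω => gcl_nonneg _ _) (fun ω => gcl_le_one _ _)
        have hinner : ∀ a : ℝ, 0 ≤ a → a ≤ 1 →
            S.E (fun ω' => a + gcl c (X (m+1) ω') * (1 - a)) = ((a + (1-a) * e' : ℝ) : EReal) := by
          intro a h0a h1a
          have hfun : (fun ω' => a + gcl c (X (m+1) ω') * (1 - a))
              = (fun ω' => a + (1-a) * gcl c (X (m+1) ω')) := by
            funext ω'; ring
          rw [hfun]
          exact S.E_affine hmemg' (fun ω => gcl_nonneg _ _) (fun ω => gcl_le_one _ _)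
            a (1-a) (by linarith)
        -- side condition 2
        set A : Ω → ℝ := fun ω => PhiF N m (fun j : Fin m => X ((j:ℕ)+1) ω) with hAdef
        have hA0 : ∀ ω, 0 ≤ A ω := fun ω => PhiF_nonneg _ _ _
        have hA1 : ∀ ω, A ω ≤ 1 := fun ω => PhiF_le_one _ _ _
        have hAmem : A ∈ S.H := memPhi m
        have hinner_toReal : ∀ ω,
            (S.E (fun ω' => |φ (Fin.append (fun i : Fin m => X ((i:ℕ)+1) ω)
              (fun _ : Fin 1 => X (m+1) ω'))|)).toReal = A ω + (1 - A ω) * e' := by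
          intro ω
          have hfun : (fun ω' => |φ (Fin.append (fun i : Fin m => X ((i:ℕ)+1) ω)
              (fun _ : Fin 1 => X (m+1) ω'))|)
              = (fun ω' => A ω + gcl c (X (m+1) ω') * (1 - A ω)) := by
            funext ω'
            rw [hφapp _ (fun _ => X (m+1) ω')]
            have h0s : 0 ≤ gcl c (X (m+1) ω') := gcl_nonneg _ _
            exact abs_of_nonneg (by nlinarith [hA0 ω, hA1 ω, gcl_le_one c (X (m+1) ω')])
          rw [hfun, hinner (A ω) (hA0 ω) (hA1 ω), EReal.toReal_coe]
        have hside2 : S.E (fun ω =>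
            |(S.E (fun ω' => |φ (Fin.append (fun i : Fin m => X ((i:ℕ)+1) ω)
              (fun _ : Fin 1 => X (m+1) ω'))|)).toReal|) ≠ ⊤ := by
          have hfun : (fun ω =>
              |(S.E (fun ω' => |φ (Fin.append (fun i : Fin m => X ((i:ℕ)+1) ω)
                (fun _ : Fin 1 => X (m+1) ω'))|)).toReal|)
              = (fun ω => A ω + (1 - A ω) * e') := by
            funext ω
            rw [hinner_toReal ω]
            exact abs_of_nonneg (by nlinarith [hA0 ω, hA1 ω])
          rw [hfun]
          have hmem2 : (fun ω => A ω + (1 - A ω) * e') ∈ S.H := by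
            refine S.mem_comp1 hAmem (fun t => t + (1 - t) * e') (|1 - e'| + 1)
              (by positivity) (fun s t => ?_)
            have h1 : (s + (1 - s) * e') - (t + (1 - t) * e') = (s - t) * (1 - e') := by ring
            rw [h1, abs_mul]
            nlinarith [abs_nonneg (s - t), abs_nonneg (1 - e')]
          exact S.E_ne_top hmem2 (b := 1) (fun ω => by nlinarith [hA0 ω, hA1 ω])
        -- apply independence
        have heq := hind m hm1 φ hφCL hside1 hside2
        -- rewrite LHS of heq
        have hLHS : (fun ω => φ (Fin.append (fun i : Fin m => X ((i:ℕ)+1) ω)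
            (fun _ : Fin 1 => X (m+1) ω)))
            = (fun ω => PhiF N (m+1) (fun j : Fin (m+1) => X ((j:ℕ)+1) ω)) := by
          funext ω
          rw [hφapp _ _]
          rw [PhiF_succ hNm (fun j : Fin (m+1) => X ((j:ℕ)+1) ω)]
          rfl
        -- rewrite RHS of heq
        have hRHS : (fun ω => (S.E (fun ω' => φ (Fin.append (fun i : Fin m => X ((i:ℕ)+1) ω)
            (fun _ : Fin 1 => X (m+1) ω')))).toReal)
            = (fun ω => e' + (1 - e') * A ω) := by
          funext ω
          have hfun : (fun ω' => φ (Fin.append (fun i : Fin m => X ((i:ℕ)+1) ω)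
              (fun _ : Fin 1 => X (m+1) ω')))
              = (fun ω' => A ω + gcl c (X (m+1) ω') * (1 - A ω)) := by
            funext ω'
            exact hφapp _ (fun _ => X (m+1) ω')
          rw [hfun, hinner (A ω) (hA0 ω) (hA1 ω), EReal.toReal_coe]
          ring
        rw [hLHS, hRHS] at heq
        -- compute the remaining expectation via E_affine and ih
        have hAE : S.E A = ((1 - ∏ k ∈ Finset.Icc N m,
            (1 - (S.E (fun ω => gcl ((N:ℝ)*(k:ℝ)) (X k ω))).toReal) : ℝ) : EReal) := ih
        have hβ : (S.E A).toReal = 1 - ∏ k ∈ Finset.Icc N m,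
            (1 - (S.E (fun ω => gcl ((N:ℝ)*(k:ℝ)) (X k ω))).toReal) := by
          rw [hAE, EReal.toReal_coe]
        have hEfin : S.E (fun ω => e' + (1 - e') * A ω)
            = ((e' + (1 - e') * (S.E A).toReal : ℝ) : EReal) :=
          S.E_affine hAmem hA0 hA1 e' (1 - e') (by linarith)
        rw [hEfin] at heq
        rw [heq, hβ]
        -- final arithmetic
        have hins : Finset.Icc N (m+1) = insert (m+1) (Finset.Icc N m) :=
          (Finset.insert_Icc_right_eq_Icc_add_one hNm).symm
        rw [hins, Finset.prod_insert (by simp)]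
        have hcast : (fun ω => gcl ((N:ℝ)*((m+1:ℕ):ℝ)) (X (m+1) ω))
            = (fun ω => gcl c (X (m+1) ω)) := by
          rw [hcdef]
          push_cast
          rfl
        rw [hcast, ← he'def]
        norm_cast
        ring
    · -- m+1 < N : both sides are trivial
      have hfun : (fun ω => PhiF N (m+1) (fun j : Fin (m+1) => X ((j:ℕ)+1) ω))
          = (fun _ => (0:ℝ)) := by
        funext ω
        unfold PhiF
        rw [Finset.prod_congr rfl (fun j _ => by
          unfold fct
          rw [if_neg (by omega)])]
        rw [Finset.prod_const_one]
        ring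
      rw [hfun, S.const_eq, Finset.Icc_eq_empty (by omega), Finset.prod_empty]
      norm_num

end KeyInduction
section MorePieces

variable {Ω : Type*}

lemma CLLip_of_lip1 (ψ : ℝ → ℝ) (C : ℝ) (hC : 0 < C)
    (hlip : ∀ s t, |ψ s - ψ t| ≤ C * |s - t|) : CLLip (fun v : Fin 1 → ℝ => ψ (v 0)) := by
  refine ⟨C, hC, 0, fun x y => ?_⟩
  have h1 : |x 0 - y 0| ≤ ‖x - y‖ := by
    have := norm_le_pi_norm (x - y) 0
    simpa using this
  have h2 := hlip (x 0) (y 0)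
  have h4 : C * ‖x - y‖ ≤ C * (1 + ‖x‖ ^ 0 + ‖y‖ ^ 0) * ‖x - y‖ := by
    simp only [pow_zero]
    nlinarith [norm_nonneg (x - y)]
  nlinarith [norm_nonneg (x - y)]

lemma E_gcl_iid (S : SLE Ω) (X : ℕ → Ω → ℝ) (hid : S.IdentDistrib X)
    {k : ℕ} (hk : 1 ≤ k) (c : ℝ) (hc : 1 ≤ c) :
    S.E (fun ω => gcl c (X k ω)) = S.E (fun ω => gcl c (X 1 ω)) := by
  have hCL : CLLip (fun v : Fin 1 → ℝ => gcl c (v 0)) :=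
    CLLip_of_lip1 (gcl c) 1 one_pos (fun s t => by simpa using gcl_lip hc s t)
  exact hid k hk (fun v : Fin 1 → ℝ => gcl c (v 0)) hCL

lemma V_tail_le_E_gcl (S : SLE Ω) (X : ℕ → Ω → ℝ) (hX1 : X 1 ∈ S.H)
    {c : ℝ} (hc : 1 ≤ c) :
    S.V {ω | 2*c ≤ |X 1 ω|} ≤ S.E (fun ω => gcl c (X 1 ω)) := by
  have hc0 : (0:ℝ) < c := lt_of_lt_of_le one_pos hc
  have hmem : (fun ω => gcl c (X 1 ω)) ∈ S.H :=
    S.mem_comp1 hX1 (gcl c) 1 one_pos (fun s t => by simpa using gcl_lip hc s t)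
  apply S.V_le_E hmem
  intro ω
  by_cases hω : ω ∈ {ω | 2*c ≤ |X 1 ω|}
  · rw [Set.indicator_of_mem hω]
    exact le_of_eq (gcl_eq_one hc0 hω).symm
  · rw [Set.indicator_of_notMem hω]
    exact gcl_nonneg _ _

lemma limsup_eq_top_of_unbounded (X : ℕ → Ω → ℝ) (ω : Ω)
    (hω : ∀ M : ℕ, ∃ k, M+1 ≤ k ∧ ((M:ℝ)+1)*(k:ℝ) ≤ |X k ω|) :
    Filter.limsup
      (fun n : ℕ => ((|∑ k ∈ Finset.Icc 1 n, X k ω| / n : ℝ) : EReal)) atTop = ⊤ := by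
  by_contra hne
  have hlt : Filter.limsup
      (fun n : ℕ => ((|∑ k ∈ Finset.Icc 1 n, X k ω| / n : ℝ) : EReal)) atTop < ⊤ :=
    lt_top_iff_ne_top.2 hne
  obtain ⟨C, hC1, -⟩ := EReal.lt_iff_exists_real_btwn.1 hlt
  have hev : ∀ᶠ n : ℕ in atTop,
      ((|∑ k ∈ Finset.Icc 1 n, X k ω| / n : ℝ) : EReal) < (C : EReal) :=
    Filter.eventually_lt_of_limsup_lt hC1
  obtain ⟨N₀, hN₀⟩ := Filter.eventually_atTop.1 hev
  set Sn : ℕ → ℝ := fun n => ∑ k ∈ Finset.Icc 1 n, X k ω with hSdef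
  set C' : ℝ := max C 1 with hC'def
  have hC'0 : (0:ℝ) < C' := lt_of_lt_of_le one_pos (le_max_right _ _)
  have hSb : ∀ n, N₀ ≤ n → |Sn n| ≤ C' * n := by
    intro n hn
    rcases Nat.eq_zero_or_pos n with h0 | h1
    · subst h0
      simp [hSdef]
    · have := hN₀ n hn
      have hreal : |Sn n| / (n:ℝ) < C := by exact_mod_cast this
      have hn0 : (0:ℝ) < n := by exact_mod_cast h1
      rw [div_lt_iff₀ hn0] at hreal
      have : C * n ≤ C' * n := by
        apply mul_le_mul_of_nonneg_right (le_max_left _ _) (le_of_lt hn0)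
      linarith
  set M : ℕ := max N₀ (Nat.ceil (2*C')) with hMdef
  obtain ⟨k, hk1, hk2⟩ := hω M
  have hk0 : 1 ≤ k := by omega
  have hXk : X k ω = Sn k - Sn (k-1) := by
    have hk' : k = (k-1) + 1 := by omega
    rw [hSdef]
    dsimp only
    rw [hk']
    rw [Finset.sum_Icc_succ_top (by omega)]
    simp
  have hb1 : |Sn k| ≤ C' * k := hSb k (by omega)
  have hb2 : |Sn (k-1)| ≤ C' * (k-1 : ℕ) := hSb (k-1) (by omega)
  have hcast : ((k-1 : ℕ) : ℝ) = (k:ℝ) - 1 := by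
    have : (1:ℕ) ≤ k := hk0
    push_cast [Nat.cast_sub this]
    ring
  have hXkb : |X k ω| ≤ 2 * C' * k := by
    rw [hXk]
    have := abs_sub (Sn k) (Sn (k-1))
    have h3 : |Sn k - Sn (k-1)| ≤ |Sn k| + |Sn (k-1)| := abs_sub _ _
    rw [hcast] at hb2
    have hk1r : (1:ℝ) ≤ (k:ℝ) := by exact_mod_cast hk0
    nlinarith
  have hM2C : 2*C' ≤ (M:ℝ) := by
    have := Nat.le_ceil (2*C')
    have h2 : ((Nat.ceil (2*C') : ℕ) : ℝ) ≤ (M:ℝ) := by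
      exact_mod_cast le_max_right N₀ (Nat.ceil (2*C'))
    linarith
  have hk1r : (1:ℝ) ≤ (k:ℝ) := by exact_mod_cast hk0
  nlinarith

end MorePieces
section SumHelper

lemma sum_le_of_prod_ge {N m : ℕ} {e : ℕ → ℝ} {ε : ℝ} (hε : 0 < ε)
    (h1 : ∀ k ∈ Finset.Icc N m, e k ≤ 1)
    (hprod : ε ≤ ∏ k ∈ Finset.Icc N m, (1 - e k)) :
    ∑ k ∈ Finset.Icc N m, e k ≤ -Real.log ε := by
  have hexp : (∏ k ∈ Finset.Icc N m, (1 - e k))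
      ≤ Real.exp (-(∑ k ∈ Finset.Icc N m, e k)) := by
    have h2 : -(∑ k ∈ Finset.Icc N m, e k) = ∑ k ∈ Finset.Icc N m, -(e k) := by
      rw [Finset.sum_neg_distrib]
    rw [h2, Real.exp_sum]
    apply Finset.prod_le_prod
    · intro k hk; linarith [h1 k hk]
    · intro k hk
      have := Real.add_one_le_exp (-(e k))
      linarith
  have h2 : ε ≤ Real.exp (-(∑ k ∈ Finset.Icc N m, e k)) := le_trans hprod hexp
  have h3 : Real.log ε ≤ -(∑ k ∈ Finset.Icc N m, e k) := by
    have := (Real.log_le_log_iff hε (Real.exp_pos _)).2 h2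
    rwa [Real.log_exp] at this
  linarith

end SumHelper
/-- **Converse strong law for the outer capacity (Theorem 4(b)).**
Let `{X_n ; n ≥ 1}` be independent and identically distributed random variables, `V` the
capacity generated by `E` and `V*` the associated outer capacity. Suppose `V*` is
continuous and `E` is countably sub-additive. If `V*(limsup |S_n|/n = +∞) < 1`, then
`C_V[|X_1|] < ∞`. -/
theorem slln_converse_outer_capacity {Ω : Type*} (S : SLE Ω) (X : ℕ → Ω → ℝ)
    (hH : ∀ i, 1 ≤ i → X i ∈ S.H)
    (hid : S.IdentDistrib X)
    (hind : S.IndepSeq X)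
    (hVbelow : ∀ A : ℕ → Set Ω, Monotone A → S.Vstar (⋃ i, A i) = ⨆ i, S.Vstar (A i))
    (hVabove : ∀ A : ℕ → Set Ω, Antitone A → S.Vstar (⋂ i, A i) = ⨅ i, S.Vstar (A i))
    (hEsub : ∀ (X₀ : Ω → ℝ) (Y : ℕ → Ω → ℝ), X₀ ∈ S.H → (∀ i, Y i ∈ S.H) →
      (∀ ω, 0 ≤ X₀ ω) → (∀ i ω, 0 ≤ Y i ω) →
      (∀ ω, ENNReal.ofReal (X₀ ω) ≤ ∑' i, ENNReal.ofReal (Y i ω)) →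
      S.E X₀ ≤ ((∑' i, erealToENNReal (S.E (Y i)) : ℝ≥0∞) : EReal))
    (hlt : S.Vstar {ω | Filter.limsup
        (fun n : ℕ => ((|∑ k ∈ Finset.Icc 1 n, X k ω| / n : ℝ) : EReal)) atTop = ⊤} < 1) :
    S.choquet (fun ω => |X 1 ω|) < ⊤ := by
  classical
  -- Step 1: find a level N with V*(D (N-1)) < 1
  set D : ℕ → Set Ω := fun M => {ω | ∃ k, M+1 ≤ k ∧ ((M:ℝ)+1)*(k:ℝ) ≤ |X k ω|} with hDdef
  have hDanti : Antitone D := by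
    intro M M' hMM' ω hω
    rw [hDdef] at hω ⊢
    obtain ⟨k, hk1, hk2⟩ := hω
    refine ⟨k, by omega, le_trans ?_ hk2⟩
    apply mul_le_mul_of_nonneg_right _ (Nat.cast_nonneg k)
    have : (M:ℝ) ≤ (M':ℝ) := by exact_mod_cast hMM'
    linarith
  have hDsub : (⋂ M, D M) ⊆ {ω | Filter.limsup
      (fun n : ℕ => ((|∑ k ∈ Finset.Icc 1 n, X k ω| / n : ℝ) : EReal)) atTop = ⊤} := by
    intro ω hω
    have hωM : ∀ M : ℕ, ∃ k, M+1 ≤ k ∧ ((M:ℝ)+1)*(k:ℝ) ≤ |X k ω| := by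
      intro M
      have := Set.mem_iInter.1 hω M
      rwa [hDdef] at this
    exact limsup_eq_top_of_unbounded X ω hωM
  have hinf : ⨅ M, S.Vstar (D M) < 1 := by
    rw [← hVabove D hDanti]
    exact lt_of_le_of_lt (S.Vstar_mono hDsub) hlt
  obtain ⟨M₀, hM₀⟩ := iInf_lt_iff.1 hinf
  set N : ℕ := M₀ + 1 with hNdef
  have hN : 1 ≤ N := by omega
  have hN0 : (0:ℝ) < (N:ℝ) := by exact_mod_cast hN
  have hVD0 : (0:EReal) ≤ S.Vstar (D M₀) := S.Vstar_nonneg _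
  have hVDne_top : S.Vstar (D M₀) ≠ ⊤ := ne_top_of_lt hM₀
  have hVDne_bot : S.Vstar (D M₀) ≠ ⊥ := fun h => by simp [h] at hVD0
  set δ : ℝ := (S.Vstar (D M₀)).toReal with hδdef
  have hVDeq : S.Vstar (D M₀) = (δ:EReal) := (EReal.coe_toReal hVDne_top hVDne_bot).symm
  have hδ1 : δ < 1 := by
    have h := hM₀
    rw [hVDeq] at h
    exact_mod_cast h
  have hδ0 : (0:ℝ) ≤ δ := by
    have h := hVD0
    rw [hVDeq] at h
    exact_mod_cast h
  -- the e-sequence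
  set e : ℕ → ℝ := fun k => (S.E (fun ω => gcl ((N:ℝ)*(k:ℝ)) (X k ω))).toReal with hedef
  have hgc : ∀ k:ℕ, 1 ≤ k → (1:ℝ) ≤ (N:ℝ)*(k:ℝ) := by
    intro k hk
    have h2 : (1:ℝ) ≤ (k:ℝ) := by exact_mod_cast hk
    have h1 : (1:ℝ) ≤ (N:ℝ) := by exact_mod_cast hN
    nlinarith
  have memg : ∀ k : ℕ, 1 ≤ k → (fun ω => gcl ((N:ℝ)*(k:ℝ)) (X k ω)) ∈ S.H := by
    intro k hk
    exact S.mem_comp1 (hH k hk) (gcl ((N:ℝ)*(k:ℝ))) 1 one_pos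
      (fun s t => by simpa using gcl_lip (hgc k hk) s t)
  have he0 : ∀ k, 1 ≤ k → 0 ≤ e k := by
    intro k hk
    rw [hedef]
    exact S.le_toReal_E (memg k hk) (fun ω => gcl_nonneg _ _) (fun ω => gcl_le_one _ _)
  have he1 : ∀ k, 1 ≤ k → e k ≤ 1 := by
    intro k hk
    rw [hedef]
    exact S.toReal_E_le (memg k hk) (fun ω => gcl_nonneg _ _) (fun ω => gcl_le_one _ _)
  -- Step 2: partial sums of e are bounded
  set K : ℝ := -Real.log (1 - δ) with hKdef
  have hsum : ∀ m : ℕ, ∑ k ∈ Finset.Icc N m, e k ≤ K := by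
    intro m
    set U : Set Ω := ⋃ k ∈ Finset.Icc N m, {ω | (N:ℝ)*(k:ℝ) ≤ |X k ω|} with hUdef
    have hUD : U ⊆ D M₀ := by
      intro ω hω
      rw [hUdef] at hω
      simp only [Set.mem_iUnion] at hω
      obtain ⟨k, hk, hω2⟩ := hω
      rw [Finset.mem_Icc] at hk
      rw [hDdef]
      refine ⟨k, by omega, ?_⟩
      have hMN : ((M₀:ℝ)+1) = (N:ℝ) := by rw [hNdef]; push_cast; ring
      rw [hMN]
      exact hω2
    have hW0 : ∀ ω, 0 ≤ PhiF N m (fun j : Fin m => X ((j:ℕ)+1) ω) :=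
      fun ω => PhiF_nonneg _ _ _
    have hW1 : ∀ ω, PhiF N m (fun j : Fin m => X ((j:ℕ)+1) ω) ≤ 1 :=
      fun ω => PhiF_le_one _ _ _
    have hWmem : (fun ω => PhiF N m (fun j : Fin m => X ((j:ℕ)+1) ω)) ∈ S.H :=
      S.comp_mem (fun j : Fin m => X ((j:ℕ)+1)) (PhiF N m)
        (fun j => hH _ (by omega)) (PhiF_CLLip hN m)
    have hWzero : ∀ ω, ω ∉ U → PhiF N m (fun j : Fin m => X ((j:ℕ)+1) ω) = 0 := by
      intro ω hω
      rw [PhiF_ext hN m (fun k => X k ω)]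
      have hone : ∀ k ∈ Finset.Icc N m, (1 - gcl ((N:ℝ)*(k:ℝ)) (X k ω)) = 1 := by
        intro k hk
        have hnot : ¬ ((N:ℝ)*(k:ℝ) ≤ |X k ω|) := by
          intro hcon
          exact hω (by
            rw [hUdef]
            simp only [Set.mem_iUnion]
            exact ⟨k, hk, hcon⟩)
        have hk1 : 1 ≤ k := by rw [Finset.mem_Icc] at hk; omega
        rw [gcl_eq_zero (lt_of_lt_of_le one_pos (hgc k hk1)) (le_of_lt (not_le.1 hnot))]
        ring
      rw [Finset.prod_congr rfl hone, Finset.prod_const_one]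
      ring
    have hEW : S.E (fun ω => PhiF N m (fun j : Fin m => X ((j:ℕ)+1) ω)) =
        ((1 - ∏ k ∈ Finset.Icc N m, (1 - e k) : ℝ) : EReal) :=
      key_induction S X hH hind hN m
    have hVs : S.E (fun ω => PhiF N m (fun j : Fin m => X ((j:ℕ)+1) ω)) ≤ S.Vstar U :=
      S.Vstar_ge_E hEsub hWmem hW0 hW1 hWzero
    have hchain : ((1 - ∏ k ∈ Finset.Icc N m, (1 - e k) : ℝ) : EReal) ≤ (δ : EReal) := by
      calc ((1 - ∏ k ∈ Finset.Icc N m, (1 - e k) : ℝ) : EReal)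
          = S.E (fun ω => PhiF N m (fun j : Fin m => X ((j:ℕ)+1) ω)) := hEW.symm
        _ ≤ S.Vstar U := hVs
        _ ≤ S.Vstar (D M₀) := S.Vstar_mono hUD
        _ = (δ:EReal) := hVDeq
    have hreal : 1 - ∏ k ∈ Finset.Icc N m, (1 - e k) ≤ δ := EReal.coe_le_coe_iff.1 hchain
    have hprodge : 1 - δ ≤ ∏ k ∈ Finset.Icc N m, (1 - e k) := by linarith
    exact sum_le_of_prod_ge (by linarith)
      (fun k hk => he1 k (by rw [Finset.mem_Icc] at hk; omega)) hprodge
  -- Step 3: the tail capacities are summable, hence the integral is finite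
  set c : ℝ := 2*(N:ℝ) with hcdef
  have hc0 : (0:ℝ) < c := by rw [hcdef]; linarith
  set f : ℝ → ℝ≥0∞ := fun t => erealToENNReal (S.V {ω | t ≤ |X 1 ω|}) with hfdef
  have hf_anti : ∀ s t : ℝ, s ≤ t → f t ≤ f s := by
    intro s t hst
    rw [hfdef]
    apply erealToENNReal_mono_nonneg
    · refine ne_top_of_le_ne_top ?_ (S.V_le_one _)
      rw [← EReal.coe_one]
      exact EReal.coe_ne_top 1
    · exact S.V_nonneg _
    · apply S.V_mono
      intro ω hω
      exact le_trans hst hω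
  have hf_le_one : ∀ t, f t ≤ 1 := by
    intro t
    rw [hfdef]
    exact erealToENNReal_le_one (S.V_le_one _)
  have hfq : ∀ j : ℕ, 1 ≤ j → f (c*(j:ℝ)) ≤ ENNReal.ofReal (e j) := by
    intro j hj
    have hc1 : (1:ℝ) ≤ (N:ℝ)*(j:ℝ) := hgc j hj
    have h1 : S.V {ω | 2*((N:ℝ)*(j:ℝ)) ≤ |X 1 ω|}
        ≤ S.E (fun ω => gcl ((N:ℝ)*(j:ℝ)) (X 1 ω)) :=
      V_tail_le_E_gcl S X (hH 1 le_rfl) hc1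
    have h2 : S.E (fun ω => gcl ((N:ℝ)*(j:ℝ)) (X 1 ω))
        = S.E (fun ω => gcl ((N:ℝ)*(j:ℝ)) (X j ω)) :=
      (E_gcl_iid S X hid hj _ hc1).symm
    have h3 : S.E (fun ω => gcl ((N:ℝ)*(j:ℝ)) (X j ω)) = ((e j : ℝ) : EReal) := by
      rw [hedef]
      exact S.E_eq_coe (memg j hj) (fun ω => gcl_nonneg _ _) (fun ω => gcl_le_one _ _)
    have hmul : c*(j:ℝ) = 2*((N:ℝ)*(j:ℝ)) := by rw [hcdef]; ring
    rw [hfdef]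
    dsimp only
    rw [hmul]
    exact erealToENNReal_le_ofReal (he0 j hj) (le_trans h1 (le_of_eq (h2.trans h3)))
  set q : ℕ → ℝ≥0∞ := fun j => if j < N then 1 else ENNReal.ofReal (e j) with hqdef
  have hfq' : ∀ j : ℕ, f (c*(j:ℝ)) ≤ q j := by
    intro j
    rw [hqdef]
    dsimp only
    split_ifs with hj
    · exact hf_le_one _
    · exact hfq j (by omega)
  have hqsum : ∑' j, q j ≤ (N : ℝ≥0∞) + ENNReal.ofReal K := by
    rw [ENNReal.tsum_eq_iSup_sum]
    apply iSup_le
    intro s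
    rw [← Finset.sum_filter_add_sum_filter_not s (fun j => j < N)]
    apply add_le_add
    · have hq1 : ∀ j ∈ s.filter (fun j => j < N), q j = 1 := by
        intro j hj
        rw [hqdef]
        dsimp only
        rw [if_pos (Finset.mem_filter.1 hj).2]
      rw [Finset.sum_congr rfl hq1, Finset.sum_const, nsmul_eq_mul, mul_one]
      have hcard : (s.filter (fun j => j < N)).card ≤ N := by
        have hsub : s.filter (fun j => j < N) ⊆ Finset.range N := by
          intro j hj
          rw [Finset.mem_range]
          exact (Finset.mem_filter.1 hj).2
        calc (s.filter (fun j => j < N)).card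
            ≤ (Finset.range N).card := Finset.card_le_card hsub
          _ = N := Finset.card_range N
      exact_mod_cast Nat.cast_le.2 hcard
    · have hq2 : ∀ j ∈ s.filter (fun j => ¬ j < N), q j = ENNReal.ofReal (e j) := by
        intro j hj
        rw [hqdef]
        dsimp only
        rw [if_neg (Finset.mem_filter.1 hj).2]
      have hmem1 : ∀ j ∈ s.filter (fun j => ¬ j < N), 1 ≤ j := by
        intro j hj
        have := (Finset.mem_filter.1 hj).2
        omega
      rw [Finset.sum_congr rfl hq2,
        ← ENNReal.ofReal_sum_of_nonneg (fun j hj => he0 j (hmem1 j hj))]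
      apply ENNReal.ofReal_le_ofReal
      have hsub : s.filter (fun j => ¬ j < N) ⊆ Finset.Icc N (s.sup id) := by
        intro j hj
        rw [Finset.mem_Icc]
        obtain ⟨hjs, hjN⟩ := Finset.mem_filter.1 hj
        exact ⟨by omega, Finset.le_sup (f := id) hjs⟩
      calc ∑ j ∈ s.filter (fun j => ¬ j < N), e j
          ≤ ∑ j ∈ Finset.Icc N (s.sup id), e j :=
            Finset.sum_le_sum_of_subset_of_nonneg hsub
              (fun j hj _ => he0 j (by rw [Finset.mem_Icc] at hj; omega))
        _ ≤ K := hsum (s.sup id)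
  -- the step-function majorant
  set G : ℝ → ℝ≥0∞ := fun t =>
    ∑' j : ℕ, (Set.Ioc (c*(j:ℝ)) (c*((j:ℝ)+1))).indicator (fun _ => q j) t with hGdef
  have hfG : ∀ t ∈ Set.Ioi (0:ℝ), f t ≤ G t := by
    intro t ht
    rw [Set.mem_Ioi] at ht
    have htc : 0 < t/c := div_pos ht hc0
    set j : ℕ := Nat.ceil (t/c) - 1 with hjdef
    have hceil1 : 1 ≤ Nat.ceil (t/c) := Nat.one_le_ceil_iff.2 htc
    have hjcast : ((j:ℕ):ℝ) = (Nat.ceil (t/c) : ℝ) - 1 := by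
      rw [hjdef, Nat.cast_sub hceil1]
      norm_num
    have hupper : t ≤ c*((j:ℝ)+1) := by
      have h1 : t/c ≤ (Nat.ceil (t/c) : ℝ) := Nat.le_ceil _
      have h2 : (j:ℝ)+1 = (Nat.ceil (t/c) : ℝ) := by rw [hjcast]; ring
      rw [h2]
      calc t = c * (t/c) := by field_simp
        _ ≤ c * (Nat.ceil (t/c) : ℝ) := by
            exact mul_le_mul_of_nonneg_left h1 (le_of_lt hc0)
    have hlower : c*(j:ℝ) < t := by
      have h2 : ((Nat.ceil (t/c) : ℝ)) - 1 < t/c := by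
        have := Nat.ceil_lt_add_one (le_of_lt htc)
        linarith
      calc c*(j:ℝ) = c*((Nat.ceil (t/c):ℝ) - 1) := by rw [hjcast]
        _ < c*(t/c) := by exact mul_lt_mul_of_pos_left h2 hc0
        _ = t := by field_simp
    have hmem : t ∈ Set.Ioc (c*(j:ℝ)) (c*((j:ℝ)+1)) := ⟨hlower, hupper⟩
    calc f t ≤ f (c*(j:ℝ)) := hf_anti _ _ (le_of_lt hlower)
      _ ≤ q j := hfq' j
      _ = (Set.Ioc (c*(j:ℝ)) (c*((j:ℝ)+1))).indicator (fun _ => q j) t :=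
          (Set.indicator_of_mem hmem (fun _ => q j)).symm
      _ ≤ G t := by
          rw [hGdef]
          exact ENNReal.le_tsum j
  have hGint : (∫⁻ t in Set.Ioi (0:ℝ), G t)
      ≤ ((N : ℝ≥0∞) + ENNReal.ofReal K) * ENNReal.ofReal c := by
    calc (∫⁻ t in Set.Ioi (0:ℝ), G t) ≤ ∫⁻ t, G t :=
          MeasureTheory.setLIntegral_le_lintegral _ _
      _ = ∑' j : ℕ, ∫⁻ t, (Set.Ioc (c*(j:ℝ)) (c*((j:ℝ)+1))).indicator (fun _ => q j) t := by
          rw [hGdef]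
          exact MeasureTheory.lintegral_tsum
            (fun j => (Measurable.indicator measurable_const measurableSet_Ioc).aemeasurable)
      _ = ∑' j : ℕ, q j * ENNReal.ofReal c := by
          apply tsum_congr
          intro j
          rw [MeasureTheory.lintegral_indicator measurableSet_Ioc,
            MeasureTheory.setLIntegral_const, Real.volume_Ioc]
          congr 2
          ring
      _ = (∑' j, q j) * ENNReal.ofReal c := ENNReal.tsum_mul_right
      _ ≤ ((N : ℝ≥0∞) + ENNReal.ofReal K) * ENNReal.ofReal c := mul_le_mul_left hqsum _
  have hI1 : (∫⁻ t in Set.Ioi (0:ℝ), f t) ≠ ⊤ := by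
    have h1 : (∫⁻ t in Set.Ioi (0:ℝ), f t) ≤ ∫⁻ t in Set.Ioi (0:ℝ), G t :=
      MeasureTheory.setLIntegral_mono' measurableSet_Ioi hfG
    have h2 := le_trans h1 hGint
    refine ne_top_of_le_ne_top ?_ h2
    apply ENNReal.mul_ne_top
    · exact ENNReal.add_ne_top.2 ⟨ENNReal.natCast_ne_top N, ENNReal.ofReal_ne_top⟩
    · exact ENNReal.ofReal_ne_top
  -- Step 4: the negative part vanishes, conclude
  have hI2 : (∫⁻ t in Set.Iio (0:ℝ), erealToENNReal (1 - S.V {ω | t ≤ |X 1 ω|})) = 0 := by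
    apply le_antisymm _ (zero_le (a := _))
    have hzero : ∀ t ∈ Set.Iio (0:ℝ),
        erealToENNReal (1 - S.V {ω | t ≤ |X 1 ω|}) ≤ (fun _ => (0:ℝ≥0∞)) t := by
      intro t ht
      rw [Set.mem_Iio] at ht
      have hset : {ω | t ≤ |X 1 ω|} = Set.univ :=
        Set.eq_univ_of_forall (fun ω => le_trans (le_of_lt ht) (abs_nonneg _))
      rw [hset, S.V_univ]
      have hone : (1:EReal) - 1 = 0 := by
        rw [← EReal.coe_one, ← EReal.coe_sub]
        norm_num
      rw [hone, erealToENNReal_zero]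
    have h2 : (∫⁻ t in Set.Iio (0:ℝ), erealToENNReal (1 - S.V {ω | t ≤ |X 1 ω|}))
        ≤ ∫⁻ _t in Set.Iio (0:ℝ), (0:ℝ≥0∞) :=
      MeasureTheory.setLIntegral_mono' measurableSet_Iio hzero
    simpa using h2
  have hfinal : S.choquet (fun ω => |X 1 ω|) =
      ((∫⁻ t in Set.Ioi (0:ℝ), f t : ℝ≥0∞) : EReal) -
      ((∫⁻ t in Set.Iio (0:ℝ), erealToENNReal (1 - S.V {ω | t ≤ |X 1 ω|}) : ℝ≥0∞) : EReal) := by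
    rw [hfdef]
    rfl
  rw [hfinal, hI2, EReal.coe_ennreal_zero, sub_zero]
  exact lt_top_iff_ne_top.2 (fun h => hI1 (EReal.coe_ennreal_eq_top_iff.1 h))
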